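/- Let β > 0 and c > 0, and define L(k) = (1/Γ(β/2)) ∫₀^∞ e^{−k c √τ} τ^{β/2 − 1} e^{−τ} dτ. Then L(k) · k^β → 2Γ(β)/(Γ(β/2) c^β) as k → ∞. -/

import Mathlib

open MeasureTheory Real Set Filter

lemma sqsub (β a : ℝ) :
    (∫ τ in Ioi (0:ℝ), Real.exp (-(a * Real.sqrt τ)) * τ ^ (β/2 - 1) * Real.exp (-τ))
      = 2 * ∫ x in Ioi (0:ℝ), Real.exp (-(a * x)) * x ^ (β - 1) * Real.exp (-(x^2)) := by
  rw [← integral_comp_rpow_Ioi_of_pos (p := 2) two_pos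
    (g := fun τ => Real.exp (-(a * Real.sqrt τ)) * τ ^ (β/2 - 1) * Real.exp (-τ)),
    ← MeasureTheory.integral_const_mul 2]
  refine setIntegral_congr_fun measurableSet_Ioi (fun x hx => ?_)
  have hx0 : (0:ℝ) < x := hx
  have hsq : Real.sqrt (x ^ 2) = x := Real.sqrt_sq hx0.le
  have hpow : (x ^ (2:ℕ)) ^ (β/2 - 1) = x ^ (β - 2) := by
    rw [← Real.rpow_two, ← Real.rpow_mul hx0.le]; ring_nf
  have hmul : x * x ^ (β - 2) = x ^ (β - 1) := by
    rw [mul_comm, ← Real.rpow_add_one hx0.ne', show β - 2 + 1 = β - 1 by ring]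
  rw [sq] at hsq hpow
  simp only [smul_eq_mul, Real.rpow_two, sq]
  rw [show (2:ℝ) - 1 = 1 by norm_num, Real.rpow_one, hsq, hpow]
  calc 2 * x * (Real.exp (-(a * x)) * x ^ (β - 2) * Real.exp (-(x*x)))
      = 2 * (Real.exp (-(a * x)) * (x * x ^ (β-2)) * Real.exp (-(x*x))) := by ring
    _ = 2 * (Real.exp (-(a * x)) * x ^ (β-1) * Real.exp (-(x*x))) := by rw [hmul]

lemma scalesub (β c k : ℝ) (hk : 0 < k) :
    (∫ x in Ioi (0:ℝ), Real.exp (-(k * c * x)) * x ^ (β - 1) * Real.exp (-(x^2)))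
      = k ^ (-β) * ∫ v in Ioi (0:ℝ),
          Real.exp (-(c * v)) * v ^ (β - 1) * Real.exp (-((v/k)^2)) := by
  have h := integral_comp_mul_left_Ioi
    (g := fun v => Real.exp (-(c * v)) * v ^ (β - 1) * Real.exp (-((v/k)^2))) 0 hk
  rw [mul_zero] at h
  have h2 : (∫ x in Ioi (0:ℝ), Real.exp (-(c * (k * x))) * (k*x) ^ (β - 1)
        * Real.exp (-((k*x/k)^2)))
      = k ^ (β-1) * ∫ x in Ioi (0:ℝ),
          Real.exp (-(k * c * x)) * x ^ (β - 1) * Real.exp (-(x^2)) := by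
    rw [← MeasureTheory.integral_const_mul]
    refine setIntegral_congr_fun measurableSet_Ioi (fun x hx => ?_)
    have hx0 : (0:ℝ) < x := hx
    rw [Real.mul_rpow hk.le hx0.le, mul_div_cancel_left₀ _ hk.ne']
    ring
  rw [h2] at h
  rw [smul_eq_mul] at h
  have : (∫ x in Ioi (0:ℝ), Real.exp (-(k * c * x)) * x ^ (β - 1) * Real.exp (-(x^2)))
      = k ^ (-(β-1)) * (k⁻¹ * ∫ v in Ioi (0:ℝ),
          Real.exp (-(c * v)) * v ^ (β - 1) * Real.exp (-((v/k)^2))) := by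
    rw [← h, ← mul_assoc, ← Real.rpow_add hk, neg_add_cancel, Real.rpow_zero, one_mul]
  rw [this, ← Real.rpow_neg_one k, ← mul_assoc, ← Real.rpow_add hk,
    show -(β-1) + (-1) = -β by ring]

lemma bound_integrable (β c : ℝ) (hβ : 0 < β) (hc : 0 < c) :
    IntegrableOn (fun v : ℝ => Real.exp (-(c * v)) * v ^ (β - 1)) (Ioi 0) := by
  have := integrableOn_rpow_mul_exp_neg_mul_rpow (p := 1) (s := β - 1) (b := c)
    (by linarith) one_pos hc
  refine this.congr_fun (fun v hv => ?_) measurableSet_Ioi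
  simp only [Real.rpow_one]; ring

lemma tendsto_Fint (β c : ℝ) (hβ : 0 < β) (hc : 0 < c) :
    Tendsto (fun k : ℝ => ∫ v in Ioi (0:ℝ),
        Real.exp (-(c * v)) * v ^ (β - 1) * Real.exp (-((v/k)^2)))
      atTop (nhds ((1/c) ^ β * Real.Gamma β)) := by
  have key : Tendsto (fun k : ℝ => ∫ v in Ioi (0:ℝ),
        Real.exp (-(c * v)) * v ^ (β - 1) * Real.exp (-((v/k)^2)))
      atTop (nhds (∫ v in Ioi (0:ℝ), Real.exp (-(c * v)) * v ^ (β - 1))) := by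
    refine tendsto_integral_filter_of_dominated_convergence
      (fun v => Real.exp (-(c * v)) * v ^ (β - 1)) ?_ ?_ (bound_integrable β c hβ hc) ?_
    · filter_upwards with k
      exact (Measurable.aestronglyMeasurable (by fun_prop)).restrict
    · filter_upwards with k
      filter_upwards [ae_restrict_mem measurableSet_Ioi] with v hv
      have hv0 : (0:ℝ) < v := hv
      have h1 : Real.exp (-((v/k)^2)) ≤ 1 :=
        Real.exp_le_one_iff.mpr (neg_nonpos.mpr (sq_nonneg _))
      have hnn : (0:ℝ) ≤ Real.exp (-(c * v)) * v ^ (β - 1) :=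
        mul_nonneg (Real.exp_pos _).le (Real.rpow_nonneg hv0.le _)
      have h2 : (0:ℝ) ≤ Real.exp (-(c * v)) * v ^ (β - 1) * Real.exp (-((v/k)^2)) :=
        mul_nonneg hnn (Real.exp_pos _).le
      rw [Real.norm_eq_abs, abs_of_nonneg h2]
      calc Real.exp (-(c * v)) * v ^ (β - 1) * Real.exp (-((v/k)^2))
          ≤ Real.exp (-(c * v)) * v ^ (β - 1) * 1 := mul_le_mul_of_nonneg_left h1 hnn
        _ = Real.exp (-(c * v)) * v ^ (β - 1) := by ring
    · filter_upwards with v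
      have h1 : Tendsto (fun k : ℝ => v / k) atTop (nhds 0) :=
        Tendsto.div_atTop tendsto_const_nhds tendsto_id
      have h2 : Tendsto (fun k : ℝ => Real.exp (-((v/k)^2))) atTop (nhds 1) := by
        have h3 : Tendsto (fun k : ℝ => -((v/k)^2)) atTop (nhds 0) := by
          have := (((continuous_pow 2).tendsto (0:ℝ)).comp h1).neg
          simpa using this
        have h4 := (Real.continuous_exp.tendsto 0).comp h3
        rw [Real.exp_zero] at h4
        exact h4
      simpa using (h2.const_mul (Real.exp (-(c * v)) * v ^ (β - 1))).congr
        (fun k => by ring)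
  have heq : (∫ v in Ioi (0:ℝ), Real.exp (-(c * v)) * v ^ (β - 1))
      = (1/c) ^ β * Real.Gamma β := by
    rw [← integral_rpow_mul_exp_neg_mul_Ioi hβ hc]
    exact setIntegral_congr_fun measurableSet_Ioi (fun v hv => by ring)
  rwa [heq] at key

/-- Bias-free pass@k tail: with
L(k) = (1/Γ(β/2)) ∫₀^∞ e^(−k c √τ) τ^(β/2−1) e^(−τ) dτ,
we have L(k) k^β → 2Γ(β)/(Γ(β/2) c^β) as k → ∞. -/
theorem bias_free_passk_tail (β c : ℝ) (hβ : 0 < β) (hc : 0 < c) :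
    Tendsto
      (fun k : ℝ =>
        ((1 / Real.Gamma (β / 2)) *
          ∫ τ in Ioi (0 : ℝ),
            Real.exp (-(k * c * Real.sqrt τ)) * τ ^ (β / 2 - 1) * Real.exp (-τ)) *
        k ^ β)
      atTop (nhds (2 * Real.Gamma β / (Real.Gamma (β / 2) * c ^ β))) := by
  have hΓ : 0 < Real.Gamma (β / 2) := Real.Gamma_pos_of_pos (by linarith)
  have hcβ : (0:ℝ) < c ^ β := Real.rpow_pos_of_pos hc β
  have hlim := (tendsto_Fint β c hβ hc).const_mul (1 / Real.Gamma (β / 2) * 2)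
  have hval : 1 / Real.Gamma (β / 2) * 2 * ((1/c) ^ β * Real.Gamma β)
      = 2 * Real.Gamma β / (Real.Gamma (β / 2) * c ^ β) := by
    rw [one_div c, Real.inv_rpow hc.le]
    field_simp
  rw [hval] at hlim
  refine hlim.congr' ?_
  filter_upwards [eventually_gt_atTop (0:ℝ)] with k hk
  rw [sqsub β (k * c), scalesub β c k hk]
  have hk1 : k ^ (-β) * k ^ β = 1 := by
    rw [← Real.rpow_add hk]; simp
  set F := ∫ v in Ioi (0:ℝ),
      Real.exp (-(c * v)) * v ^ (β - 1) * Real.exp (-((v/k)^2)) with hF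
  calc 1 / Real.Gamma (β / 2) * 2 * F
      = 1 / Real.Gamma (β / 2) * (2 * (k ^ (-β) * F)) * k ^ β := by
        rw [show 1 / Real.Gamma (β / 2) * (2 * (k ^ (-β) * F)) * k ^ β
          = 1 / Real.Gamma (β / 2) * 2 * F * (k ^ (-β) * k ^ β) by ring, hk1, mul_one]
    _ = _ := rfl
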